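/- Let r,s,t,u be integers. The assignment a ↦ a·b, b ↦ b, c ↦ c induces a well-defined automorphism θ of the presented group G(r,s,t,u). Moreover, if s is even, then φ₄ ∘ θ = φ₂ and φ₇ ∘ θ = φ₆, where φ₂, φ₄, φ₆, φ₇ : G(r,s,t,u) → ℤ/2ℤ are the homomorphisms determined on the generators (a,b,c) by (0,1,0), (1,1,0), (0,1,1), (1,1,1) respectively. -/

import Mathlib

/-- The relators of the presentation of the fundamental group of the sapphire
Sol 3-manifold determined by the matrix `[[r, s], [t, u]]`:
`a·b·a⁻¹·b`, `c²·a^(−2r)·b^(−s)` and `c·a^(2t)·b^u·c⁻¹·a^(2t)·b^u`,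
where `a, b, c` are the generators `of 0, of 1, of 2`. -/
def sapphireRels (r s t u : ℤ) : Set (FreeGroup (Fin 3)) :=
  { FreeGroup.of 0 * FreeGroup.of 1 * (FreeGroup.of 0)⁻¹ * FreeGroup.of 1,
    FreeGroup.of 2 ^ (2 : ℤ) * FreeGroup.of 0 ^ (-(2 * r)) * FreeGroup.of 1 ^ (-s),
    FreeGroup.of 2 * FreeGroup.of 0 ^ (2 * t) * FreeGroup.of 1 ^ u * (FreeGroup.of 2)⁻¹ *
      FreeGroup.of 0 ^ (2 * t) * FreeGroup.of 1 ^ u }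

/-- The fundamental group `G(r,s,t,u)` of the sapphire Sol 3-manifold. -/
abbrev SapphireGroup (r s t u : ℤ) := PresentedGroup (sapphireRels r s t u)

namespace Stmt9Aux

variable {r s t u : ℤ}

local notation "A" => (PresentedGroup.of 0 : SapphireGroup r s t u)
local notation "B" => (PresentedGroup.of 1 : SapphireGroup r s t u)
local notation "C" => (PresentedGroup.of 2 : SapphireGroup r s t u)

lemma rel_one {x : FreeGroup (Fin 3)} (hx : x ∈ sapphireRels r s t u) :
    (QuotientGroup.mk x : SapphireGroup r s t u) = 1 :=
  (QuotientGroup.eq_one_iff x).2 (Subgroup.subset_normalClosure hx)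

lemma mk_of (i : Fin 3) :
    (QuotientGroup.mk (FreeGroup.of i) : SapphireGroup r s t u) = PresentedGroup.of i := rfl

lemma rel1 : A * B * A⁻¹ * B = 1 := by
  have := rel_one (r := r) (s := s) (t := t) (u := u) (Set.mem_insert _ _)
  simp [mk_of] at this
  exact this

lemma rel2 : C ^ (2:ℤ) * A ^ (-(2*r)) * B ^ (-s) = 1 := by
  have := rel_one (r := r) (s := s) (t := t) (u := u)
    (Set.mem_insert_iff.mpr (Or.inr (Set.mem_insert _ _)))
  simp [mk_of] at this
  rw [zpow_neg, zpow_neg]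
  exact this

lemma rel3 : C * A ^ (2*t) * B ^ u * C⁻¹ * A ^ (2*t) * B ^ u = 1 := by
  have := rel_one (r := r) (s := s) (t := t) (u := u)
    (Set.mem_insert_iff.mpr (Or.inr (Set.mem_insert_iff.mpr (Or.inr rfl))))
  simp [mk_of] at this
  exact this

lemma BA : B * A = A * B⁻¹ := by
  have h1 : A * B * A⁻¹ = B⁻¹ := eq_inv_of_mul_eq_one_left rel1
  have h2 : A * B⁻¹ * A⁻¹ = B := by
    rw [show A * B⁻¹ * A⁻¹ = (A * B * A⁻¹)⁻¹ from by group, h1, inv_inv]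
  calc B * A = (A * B⁻¹ * A⁻¹) * A := by rw [h2]
    _ = A * B⁻¹ := by group

lemma ABsq : (A * B) * (A * B) = A * A := by
  rw [show A * B * (A * B) = A * (B * A) * B from by group, BA]; group

lemma ABinvsq : (A * B⁻¹) * (A * B⁻¹) = A * A := by
  have h : B⁻¹ * A = A * B := by
    rw [eq_comm, eq_inv_mul_iff_mul_eq, ← mul_assoc, BA]; group
  rw [show A * B⁻¹ * (A * B⁻¹) = A * (B⁻¹ * A) * B⁻¹ from by group, h]; group

lemma zpow_two_mul_of_sq {G : Type*} [Group G] {x a : G} (h : x * x = a * a) (k : ℤ) :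
    x ^ (2 * k) = a ^ (2 * k) := by
  rw [zpow_mul, zpow_mul]
  congr 1
  rw [show (2:ℤ) = 1 + 1 from rfl, zpow_add, zpow_one, zpow_add, zpow_one, h]

lemma AB_zpow (k : ℤ) : (A * B) ^ (2 * k) = A ^ (2 * k) :=
  zpow_two_mul_of_sq ABsq k

lemma ABinv_zpow (k : ℤ) : (A * B⁻¹) ^ (2 * k) = A ^ (2 * k) :=
  zpow_two_mul_of_sq ABinvsq k

def θf : Fin 3 → SapphireGroup r s t u := ![A * B, B, C]

def θf' : Fin 3 → SapphireGroup r s t u := ![A * B⁻¹, B, C]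

lemma hθ : ∀ x ∈ sapphireRels r s t u,
    FreeGroup.lift (θf (r := r) (s := s) (t := t) (u := u)) x = 1 := by
  intro x hx
  rcases hx with h | h | h <;> subst h <;>
    simp only [map_mul, map_inv, map_zpow, FreeGroup.lift_apply_of, θf,
      Matrix.cons_val_zero, Matrix.cons_val_one, Matrix.head_cons,
      Matrix.cons_val_two, Matrix.tail_cons]
  · rw [show A * B * B * (A * B)⁻¹ * B = A * B * A⁻¹ * B from by group]
    exact rel1
  · rw [show -(2*r) = 2 * (-r) from by ring, AB_zpow]
    have := rel2 (r := r) (s := s) (t := t) (u := u)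
    rw [show -(2*r) = 2 * (-r) from by ring] at this
    exact this
  · rw [AB_zpow]
    exact rel3

lemma hθ' : ∀ x ∈ sapphireRels r s t u,
    FreeGroup.lift (θf' (r := r) (s := s) (t := t) (u := u)) x = 1 := by
  intro x hx
  rcases hx with h | h | h <;> subst h <;>
    simp only [map_mul, map_inv, map_zpow, FreeGroup.lift_apply_of, θf',
      Matrix.cons_val_zero, Matrix.cons_val_one, Matrix.head_cons,
      Matrix.cons_val_two, Matrix.tail_cons]
  · rw [show A * B⁻¹ * B * (A * B⁻¹)⁻¹ * B = A * (A⁻¹ * (A * B * A⁻¹ * B)) from by group]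
    rw [rel1]; group
  · rw [show -(2*r) = 2 * (-r) from by ring, ABinv_zpow]
    have := rel2 (r := r) (s := s) (t := t) (u := u)
    rw [show -(2*r) = 2 * (-r) from by ring] at this
    exact this
  · rw [ABinv_zpow]
    exact rel3

def θhom : SapphireGroup r s t u →* SapphireGroup r s t u := PresentedGroup.toGroup hθ

def θhom' : SapphireGroup r s t u →* SapphireGroup r s t u := PresentedGroup.toGroup hθ'

lemma comp1 : (θhom (r := r) (s := s) (t := t) (u := u)).comp θhom' = MonoidHom.id _ := by
  apply PresentedGroup.ext
  intro x
  fin_cases x <;>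
    simp [θhom, θhom', θf, θf', PresentedGroup.toGroup.of, MonoidHom.comp_apply]

lemma comp2 : (θhom' (r := r) (s := s) (t := t) (u := u)).comp θhom = MonoidHom.id _ := by
  apply PresentedGroup.ext
  intro x
  fin_cases x <;>
    simp [θhom, θhom', θf, θf', PresentedGroup.toGroup.of, MonoidHom.comp_apply]

def θ : SapphireGroup r s t u ≃* SapphireGroup r s t u :=
  MonoidHom.toMulEquiv θhom θhom' comp2 comp1

lemma θ_of (i : Fin 3) : θ (r := r) (s := s) (t := t) (u := u) (PresentedGroup.of i) =
    θf (r := r) (s := s) (t := t) (u := u) i :=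
  PresentedGroup.toGroup.of hθ

end Stmt9Aux

theorem stmt9 (r s t u : ℤ) :
    ∃ θ : SapphireGroup r s t u ≃* SapphireGroup r s t u,
      θ (PresentedGroup.of 0) = PresentedGroup.of 0 * PresentedGroup.of 1 ∧
      θ (PresentedGroup.of 1) = PresentedGroup.of 1 ∧
      θ (PresentedGroup.of 2) = PresentedGroup.of 2 ∧
      (Even s →
        ∀ φ₂ φ₄ φ₆ φ₇ : SapphireGroup r s t u →* Multiplicative (ZMod 2),
          (φ₂ (PresentedGroup.of 0) = Multiplicative.ofAdd (0 : ZMod 2) ∧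
           φ₂ (PresentedGroup.of 1) = Multiplicative.ofAdd (1 : ZMod 2) ∧
           φ₂ (PresentedGroup.of 2) = Multiplicative.ofAdd (0 : ZMod 2)) →
          (φ₄ (PresentedGroup.of 0) = Multiplicative.ofAdd (1 : ZMod 2) ∧
           φ₄ (PresentedGroup.of 1) = Multiplicative.ofAdd (1 : ZMod 2) ∧
           φ₄ (PresentedGroup.of 2) = Multiplicative.ofAdd (0 : ZMod 2)) →
          (φ₆ (PresentedGroup.of 0) = Multiplicative.ofAdd (0 : ZMod 2) ∧
           φ₆ (PresentedGroup.of 1) = Multiplicative.ofAdd (1 : ZMod 2) ∧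
           φ₆ (PresentedGroup.of 2) = Multiplicative.ofAdd (1 : ZMod 2)) →
          (φ₇ (PresentedGroup.of 0) = Multiplicative.ofAdd (1 : ZMod 2) ∧
           φ₇ (PresentedGroup.of 1) = Multiplicative.ofAdd (1 : ZMod 2) ∧
           φ₇ (PresentedGroup.of 2) = Multiplicative.ofAdd (1 : ZMod 2)) →
          φ₄.comp θ.toMonoidHom = φ₂ ∧ φ₇.comp θ.toMonoidHom = φ₆) := by
  have h0 : Stmt9Aux.θ (PresentedGroup.of 0 : SapphireGroup r s t u) =
      PresentedGroup.of 0 * PresentedGroup.of 1 := by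
    simpa [Stmt9Aux.θf] using Stmt9Aux.θ_of (r := r) (s := s) (t := t) (u := u) 0
  have h1 : Stmt9Aux.θ (PresentedGroup.of 1 : SapphireGroup r s t u) = PresentedGroup.of 1 := by
    simpa [Stmt9Aux.θf] using Stmt9Aux.θ_of (r := r) (s := s) (t := t) (u := u) 1
  have h2 : Stmt9Aux.θ (PresentedGroup.of 2 : SapphireGroup r s t u) = PresentedGroup.of 2 := by
    simpa [Stmt9Aux.θf] using Stmt9Aux.θ_of (r := r) (s := s) (t := t) (u := u) 2
  refine ⟨Stmt9Aux.θ, h0, h1, h2, ?_⟩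
  intro _ φ₂ φ₄ φ₆ φ₇ ⟨h20, h21, h22⟩ ⟨h40, h41, h42⟩ ⟨h60, h61, h62⟩ ⟨h70, h71, h72⟩
  have key : ∀ (ψ χ : SapphireGroup r s t u →* Multiplicative (ZMod 2)),
      ψ (Stmt9Aux.θ (PresentedGroup.of 0)) = χ (PresentedGroup.of 0) →
      ψ (Stmt9Aux.θ (PresentedGroup.of 1)) = χ (PresentedGroup.of 1) →
      ψ (Stmt9Aux.θ (PresentedGroup.of 2)) = χ (PresentedGroup.of 2) →
      ψ.comp Stmt9Aux.θ.toMonoidHom = χ := by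
    intro ψ χ hA hB hC
    apply PresentedGroup.ext
    intro x
    fin_cases x
    · exact hA
    · exact hB
    · exact hC
  constructor
  · refine key _ _ ?_ ?_ ?_
    · rw [h0, map_mul, h40, h41, h20, ← ofAdd_add]; decide
    · rw [h1, h41, h21]
    · rw [h2, h42, h22]
  · refine key _ _ ?_ ?_ ?_
    · rw [h0, map_mul, h70, h71, h60, ← ofAdd_add]; decide
    · rw [h1, h71, h61]
    · rw [h2, h72, h62]
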